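/- Let μ be a partition with μ₁ ≤ n and conjugate (transpose) partition μ̃, and let 1 ≤ k ≤ n with also μ̃₁ ≤ n. Then e*_k(μ̃₁, μ̃₂, …, μ̃_n) = h*_k(μ₁, μ₂, …, μ_n), where e*_k(y₁,…,y_n) = ∑_{i₁<⋯<i_k} (y_{i₁}+k−1)(y_{i₂}+k−2)⋯(y_{i_k}) and h*_k(y₁,…,y_n) = ∑_{i₁≤⋯≤i_k} (y_{i₁}−k+1)(y_{i₂}−k+2)⋯(y_{i_k}). -/
import Mathlib

open scoped Classical

/-- The `k`-th elementary shifted symmetric polynomial. -/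
noncomputable def estar (n k : ℕ) (x : Fin n → ℂ) : ℂ :=
  ∑ i : Fin k → Fin n, if StrictMono i then
    ∏ t : Fin k, (x (i t) + ((k : ℂ) - 1 - ((t : ℕ) : ℂ))) else 0

/-- The `k`-th complete shifted symmetric polynomial. -/
noncomputable def hstar (n k : ℕ) (x : Fin n → ℂ) : ℂ :=
  ∑ i : Fin k → Fin n, if Monotone i then
    ∏ t : Fin k, (x (i t) - ((k : ℂ) - 1 - ((t : ℕ) : ℂ))) else 0

/-- The conjugate (transpose) partition: `conjP n μ j = #{i < n : μ i ≥ j+1}`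
(0-indexed; valid when `μ` vanishes from index `n` on). -/
noncomputable def conjP (n : ℕ) (μ : ℕ → ℕ) (j : ℕ) : ℕ :=
  ((Finset.range n).filter (fun i => j + 1 ≤ μ i)).card

section StmtAux
open Finset

noncomputable def Rr (u : ℂ) (m : ℕ) : ℂ := ∏ j ∈ Finset.range m, (u + j)

lemma Rr_succ (u : ℂ) (m : ℕ) : Rr u (m+1) = Rr u m * (u + m) := by
  rw [Rr, Rr, Finset.prod_range_succ]

lemma estar_zero (n : ℕ) (x : Fin n → ℂ) : estar n 0 x = 1 := by
  rw [estar]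
  have h1 : ∀ i : Fin 0 → Fin n, (if StrictMono i then
      ∏ t : Fin 0, (x (i t) + ((0:ℕ) - 1 - ((t : ℕ) : ℂ))) else 0) = 1 := by
    intro i
    have : StrictMono i := fun a => a.elim0
    rw [if_pos this, Finset.univ_eq_empty, Finset.prod_empty]
  simp only [h1, Finset.sum_const, Finset.card_univ]
  have : Fintype.card (Fin 0 → Fin n) = 1 := by simp
  rw [this]; simp

lemma hstar_zero (n : ℕ) (x : Fin n → ℂ) : hstar n 0 x = 1 := by
  rw [hstar]
  have h1 : ∀ i : Fin 0 → Fin n, (if Monotone i then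
      ∏ t : Fin 0, (x (i t) - ((0:ℕ) - 1 - ((t : ℕ) : ℂ))) else 0) = 1 := by
    intro i
    have : Monotone i := fun a => a.elim0
    rw [if_pos this, Finset.univ_eq_empty, Finset.prod_empty]
  simp only [h1, Finset.sum_const, Finset.card_univ]
  have : Fintype.card (Fin 0 → Fin n) = 1 := by simp
  rw [this]; simp

lemma hstar_fin0 (k : ℕ) (x : Fin 0 → ℂ) : hstar 0 (k+1) x = 0 := by
  rw [hstar]
  have : IsEmpty (Fin (k+1) → Fin 0) := by
    constructor; intro f; exact (f 0).elim0
  simp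

lemma estar_gt (n k : ℕ) (x : Fin n → ℂ) (h : n < k) : estar n k x = 0 := by
  rw [estar]
  apply Finset.sum_eq_zero
  intro i _
  rw [if_neg]
  intro hsm
  have := Fintype.card_le_of_injective i hsm.injective
  simp at this; omega

lemma mono_cons_iff {n k : ℕ} (j : Fin k → Fin (n+1)) :
    Monotone (Fin.cons 0 j : Fin (k+1) → Fin (n+1)) ↔ Monotone j := by
  constructor
  · intro H a b hab
    have := H (Fin.succ_le_succ_iff.mpr hab)
    simpa using this
  · intro H a b hab
    induction a using Fin.cases with
    | zero => simp [Fin.zero_le]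
    | succ a' =>
      induction b using Fin.cases with
      | zero =>
        exact absurd hab (by simp [Fin.le_def])
      | succ b' =>
        have : a' ≤ b' := by rwa [Fin.succ_le_succ_iff] at hab
        simpa using H this

lemma hstar_rec (n k : ℕ) (y : Fin (n+1) → ℂ) :
    hstar (n+1) (k+1) y
      = hstar n (k+1) (y ∘ Fin.succ) + (y 0 - (k:ℂ)) * hstar (n+1) k y := by
  rw [hstar]
  rw [← Finset.sum_filter (fun i => Monotone i)
      (fun i => ∏ t : Fin (k+1), (y (i t) - (((k+1:ℕ) : ℂ) - 1 - ((t : ℕ) : ℂ))))]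
  rw [← Finset.sum_filter_add_sum_filter_not
      (Finset.univ.filter (fun i : Fin (k+1) → Fin (n+1) => Monotone i))
      (fun i => i 0 = 0)]
  have hA : ∑ i ∈ (Finset.univ.filter (fun i : Fin (k+1) → Fin (n+1) => Monotone i)).filter
        (fun i => i 0 = 0),
      (∏ t : Fin (k+1), (y (i t) - (((k+1:ℕ) : ℂ) - 1 - ((t : ℕ) : ℂ))))
      = (y 0 - (k:ℂ)) * hstar (n+1) k y := by
    rw [hstar, ← Finset.sum_filter (fun i => Monotone i)
      (fun i => ∏ t : Fin k, (y (i t) - (((k:ℕ) : ℂ) - 1 - ((t : ℕ) : ℂ)))), Finset.mul_sum]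
    refine Finset.sum_bij' (fun i _ => i ∘ Fin.succ) (fun j _ => Fin.cons 0 j) ?_ ?_ ?_ ?_ ?_
    · intro i hi
      simp only [Finset.mem_filter, Finset.mem_univ, true_and] at hi ⊢
      exact hi.1.comp Fin.strictMono_succ.monotone
    · intro j hj
      simp only [Finset.mem_filter, Finset.mem_univ, true_and] at hj ⊢
      exact ⟨(mono_cons_iff j).mpr hj, Fin.cons_zero _ _⟩
    · intro i hi
      simp only [Finset.mem_filter, Finset.mem_univ, true_and] at hi
      funext t
      induction t using Fin.cases with
      | zero => simpa using hi.2.symm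
      | succ t' => simp
    · intro j hj
      funext t; simp
    · intro i hi
      simp only [Finset.mem_filter, Finset.mem_univ, true_and] at hi
      rw [Fin.prod_univ_succ]
      congr 1
      · rw [hi.2]
        simp only [Fin.val_zero, Nat.cast_zero, Nat.cast_add, Nat.cast_one]
        ring
      · apply Finset.prod_congr rfl
        intro t _
        simp only [Function.comp, Fin.val_succ]
        push_cast
        ring_nf
  have hB : ∑ i ∈ (Finset.univ.filter (fun i : Fin (k+1) → Fin (n+1) => Monotone i)).filter
        (fun i => ¬ i 0 = 0),
      (∏ t : Fin (k+1), (y (i t) - (((k+1:ℕ) : ℂ) - 1 - ((t : ℕ) : ℂ))))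
      = hstar n (k+1) (y ∘ Fin.succ) := by
    rw [hstar, ← Finset.sum_filter (fun i => Monotone i)
      (fun i => ∏ t : Fin (k+1), ((y ∘ Fin.succ) (i t) - (((k+1:ℕ) : ℂ) - 1 - ((t : ℕ) : ℂ))))]
    have hne : ∀ (i : Fin (k+1) → Fin (n+1)), Monotone i → ¬ i 0 = 0 → ∀ t, i t ≠ 0 := by
      intro i hm h0 t
      have : i 0 ≤ i t := hm (Fin.zero_le t)
      intro h
      exact h0 (le_antisymm (h ▸ this) (Fin.zero_le _))
    refine Finset.sum_bij' (fun i hi => fun t => (i t).pred ?_)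
      (fun j _ => Fin.succ ∘ j) ?_ ?_ ?_ ?_ ?_
    · simp only [Finset.mem_filter, Finset.mem_univ, true_and] at hi
      exact hne i hi.1 hi.2 t
    · intro i hi
      simp only [Finset.mem_filter, Finset.mem_univ, true_and] at hi ⊢
      intro a b hab
      have h1 := hi.1 hab
      rw [Fin.le_def] at h1 ⊢
      simp only [Fin.coe_pred]
      omega
    · intro j hj
      simp only [Finset.mem_filter, Finset.mem_univ, true_and] at hj ⊢
      constructor
      · intro a b hab
        exact Fin.succ_le_succ_iff.mpr (hj hab)
      · simp [Fin.succ_ne_zero]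
    · intro i hi; funext t; simp [Fin.succ_pred]
    · intro j hj; funext t; simp [Fin.pred_succ]
    · intro i hi
      apply Finset.prod_congr rfl
      intro t _
      simp [Fin.succ_pred]
  rw [hA, hB, add_comm]

lemma estar_rec (n k : ℕ) (x : Fin (n+1) → ℂ) :
    estar (n+1) (k+1) x
      = estar n (k+1) (x ∘ Fin.succ) + (x 0 + (k:ℂ)) * estar n k (x ∘ Fin.succ) := by
  rw [estar]
  rw [← Finset.sum_filter (fun i => StrictMono i)
      (fun i => ∏ t : Fin (k+1), (x (i t) + (((k+1:ℕ) : ℂ) - 1 - ((t : ℕ) : ℂ))))]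
  rw [← Finset.sum_filter_add_sum_filter_not
      (Finset.univ.filter (fun i : Fin (k+1) → Fin (n+1) => StrictMono i))
      (fun i => i 0 = 0)]
  have hA : ∑ i ∈ (Finset.univ.filter (fun i : Fin (k+1) → Fin (n+1) => StrictMono i)).filter
        (fun i => i 0 = 0),
      (∏ t : Fin (k+1), (x (i t) + (((k+1:ℕ) : ℂ) - 1 - ((t : ℕ) : ℂ))))
      = (x 0 + (k:ℂ)) * estar n k (x ∘ Fin.succ) := by
    rw [estar, ← Finset.sum_filter (fun i => StrictMono i)
      (fun i => ∏ t : Fin k, ((x ∘ Fin.succ) (i t) + (((k:ℕ) : ℂ) - 1 - ((t : ℕ) : ℂ)))),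
      Finset.mul_sum]
    have hne : ∀ (i : Fin (k+1) → Fin (n+1)), StrictMono i → i 0 = 0 →
        ∀ t : Fin k, i t.succ ≠ 0 := by
      intro i hm h0 t h
      have : i 0 < i t.succ := hm (Fin.succ_pos t)
      rw [h0, h] at this
      exact lt_irrefl _ this
    refine Finset.sum_bij' (fun i hi => fun t => (i t.succ).pred ?_)
      (fun j _ => Fin.cons 0 (Fin.succ ∘ j)) ?_ ?_ ?_ ?_ ?_
    · simp only [Finset.mem_filter, Finset.mem_univ, true_and] at hi
      exact hne i hi.1 hi.2 t
    · intro i hi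
      simp only [Finset.mem_filter, Finset.mem_univ, true_and] at hi ⊢
      intro a b hab
      have h1 := hi.1 (Fin.succ_lt_succ_iff.mpr hab)
      rw [Fin.lt_def] at h1 ⊢
      simp only [Fin.coe_pred]
      have ha := (hne i hi.1 hi.2 a)
      have : 0 < (i a.succ).val := Fin.pos_iff_ne_zero.mpr ha
      omega
    · intro j hj
      simp only [Finset.mem_filter, Finset.mem_univ, true_and] at hj ⊢
      constructor
      · intro a b hab
        induction a using Fin.cases with
        | zero =>
          induction b using Fin.cases with
          | zero => exact absurd hab (lt_irrefl _)
          | succ b' => simpa using Fin.succ_pos (j b')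
        | succ a' =>
          induction b using Fin.cases with
          | zero => exact absurd hab (by simp [Fin.lt_def])
          | succ b' =>
            have : a' < b' := by rwa [Fin.succ_lt_succ_iff] at hab
            simpa using Fin.succ_lt_succ_iff.mpr (hj this)
      · exact Fin.cons_zero _ _
    · intro i hi
      simp only [Finset.mem_filter, Finset.mem_univ, true_and] at hi
      funext t
      induction t using Fin.cases with
      | zero => simpa using hi.2.symm
      | succ t' => simp [Fin.succ_pred]
    · intro j hj
      funext t; simp [Fin.pred_succ]
    · intro i hi
      simp only [Finset.mem_filter, Finset.mem_univ, true_and] at hi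
      rw [Fin.prod_univ_succ]
      congr 1
      · rw [hi.2]
        simp only [Fin.val_zero, Nat.cast_zero, Nat.cast_add, Nat.cast_one]
        ring
      · apply Finset.prod_congr rfl
        intro t _
        simp only [Function.comp, Fin.val_succ, Fin.succ_pred]
        push_cast
        ring_nf
  have hB : ∑ i ∈ (Finset.univ.filter (fun i : Fin (k+1) → Fin (n+1) => StrictMono i)).filter
        (fun i => ¬ i 0 = 0),
      (∏ t : Fin (k+1), (x (i t) + (((k+1:ℕ) : ℂ) - 1 - ((t : ℕ) : ℂ))))
      = estar n (k+1) (x ∘ Fin.succ) := by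
    rw [estar, ← Finset.sum_filter (fun i => StrictMono i)
      (fun i => ∏ t : Fin (k+1), ((x ∘ Fin.succ) (i t) + (((k+1:ℕ) : ℂ) - 1 - ((t : ℕ) : ℂ))))]
    have hne : ∀ (i : Fin (k+1) → Fin (n+1)), StrictMono i → ¬ i 0 = 0 → ∀ t, i t ≠ 0 := by
      intro i hm h0 t
      have : i 0 ≤ i t := hm.monotone (Fin.zero_le t)
      intro h
      exact h0 (le_antisymm (h ▸ this) (Fin.zero_le _))
    refine Finset.sum_bij' (fun i hi => fun t => (i t).pred ?_)
      (fun j _ => Fin.succ ∘ j) ?_ ?_ ?_ ?_ ?_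
    · simp only [Finset.mem_filter, Finset.mem_univ, true_and] at hi
      exact hne i hi.1 hi.2 t
    · intro i hi
      simp only [Finset.mem_filter, Finset.mem_univ, true_and] at hi ⊢
      intro a b hab
      have h1 := hi.1 hab
      rw [Fin.lt_def] at h1 ⊢
      simp only [Fin.coe_pred]
      have ha := (hne i hi.1 hi.2 a)
      have : 0 < (i a).val := Fin.pos_iff_ne_zero.mpr ha
      omega
    · intro j hj
      simp only [Finset.mem_filter, Finset.mem_univ, true_and] at hj ⊢
      constructor
      · intro a b hab
        exact Fin.succ_lt_succ_iff.mpr (hj hab)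
      · simp [Fin.succ_ne_zero]
    · intro i hi; funext t; simp [Fin.succ_pred]
    · intro j hj; funext t; simp [Fin.pred_succ]
    · intro i hi
      apply Finset.prod_congr rfl
      intro t _
      simp [Fin.succ_pred]
  rw [hA, hB, add_comm]

/-- vanishing: `h*_k(μ) = 0` for `k > μ 0`, `μ` antitone. -/
lemma hstar_vanish : ∀ (n k : ℕ) (μ : ℕ → ℕ), Antitone μ → μ 0 < k →
    hstar n k (fun i : Fin n => (μ (i:ℕ) : ℂ)) = 0 := by
  intro n
  induction n with
  | zero =>
    intro k μ _ hk
    cases k with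
    | zero => omega
    | succ k' => exact hstar_fin0 k' _
  | succ n ih =>
    intro k
    induction k with
    | zero => intro μ _ h; omega
    | succ k' ihk =>
      intro μ hμ hk
      rw [hstar_rec]
      have htail : (fun i : Fin (n+1) => (μ (i:ℕ) : ℂ)) ∘ Fin.succ
          = (fun i : Fin n => ((μ ∘ (· + 1)) (i:ℕ) : ℂ)) := by
        funext i; simp [Fin.val_succ]
      rw [htail, ih (k'+1) (μ ∘ (· + 1)) (fun a b hab => hμ (by omega : a+1 ≤ b+1)) ?_]
      · -- second term
        rcases Nat.lt_or_ge (μ 0) k' with h | h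
        · rw [ihk μ hμ h]; ring
        · have : μ 0 = k' := by omega
          simp [this]
      · have : μ 1 ≤ μ 0 := hμ (by omega)
        simpa using by omega
/-- E-identity. -/
lemma eid : ∀ (n : ℕ) (x : Fin n → ℂ) (u : ℂ),
    ∑ k ∈ Finset.range (n+1), estar n k x * Rr u (n - k)
      = ∏ i : Fin n, (u + x i + (n:ℂ) - 1 - ((i:ℕ):ℂ)) := by
  intro n
  induction n with
  | zero =>
    intro x u
    simp [estar_zero, Rr]
  | succ n ih =>
    intro x u
    set x' := x ∘ Fin.succ with hx'
    rw [Finset.sum_range_succ']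
    simp only [estar_zero, one_mul, Nat.sub_zero]
    have step1 : ∀ k, estar (n+1) (k+1) x * Rr u (n+1-(k+1))
        = estar n (k+1) x' * Rr u (n+1-(k+1))
          + (x 0 + (k:ℂ)) * (estar n k x' * Rr u (n-k)) := by
      intro k
      rw [estar_rec]
      have : n+1-(k+1) = n-k := by omega
      rw [this]; ring
    rw [Finset.sum_congr rfl (fun k _ => step1 k), Finset.sum_add_distrib]
    have hsum1 : (∑ k ∈ Finset.range (n+1), estar n (k+1) x' * Rr u (n+1-(k+1)))
        + Rr u (n+1)
        = ∑ k ∈ Finset.range (n+2), estar n k x' * Rr u (n+1-k) := by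
      conv_rhs => rw [Finset.sum_range_succ']
      simp [estar_zero]
    have hsum2 : ∑ k ∈ Finset.range (n+2), estar n k x' * Rr u (n+1-k)
        = ∑ k ∈ Finset.range (n+1), estar n k x' * (Rr u (n-k) * (u + ((n-k : ℕ):ℂ))) := by
      rw [Finset.sum_range_succ, estar_gt n (n+1) x' (by omega)]
      simp only [zero_mul, add_zero]
      apply Finset.sum_congr rfl
      intro k hk
      have hk' : k ≤ n := by simpa using Nat.lt_succ_iff.mp (Finset.mem_range.mp hk)
      have : n+1-k = (n-k)+1 := by omega
      rw [this, Rr_succ]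
    have hsum3 : ∑ k ∈ Finset.range (n+1), (x 0 + (k:ℂ)) * (estar n k x' * Rr u (n-k))
        = ∑ k ∈ Finset.range (n+1), estar n k x' * Rr u (n-k) * (x 0 + (k:ℂ)) := by
      apply Finset.sum_congr rfl; intro k _; ring
    calc (∑ k ∈ Finset.range (n+1), estar n (k+1) x' * Rr u (n+1-(k+1)))
          + ∑ k ∈ Finset.range (n+1), (x 0 + (k:ℂ)) * (estar n k x' * Rr u (n-k))
          + Rr u (n+1)
        = (∑ k ∈ Finset.range (n+2), estar n k x' * Rr u (n+1-k))
          + ∑ k ∈ Finset.range (n+1), estar n k x' * Rr u (n-k) * (x 0 + (k:ℂ)) := by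
          rw [← hsum1, hsum3]; ring
      _ = ∑ k ∈ Finset.range (n+1),
            (estar n k x' * Rr u (n-k)) * ((u + x 0 + (n:ℂ))) := by
          rw [hsum2, ← Finset.sum_add_distrib]
          apply Finset.sum_congr rfl
          intro k hk
          have hk' : k ≤ n := Nat.lt_succ_iff.mp (Finset.mem_range.mp hk)
          have hcast : ((n-k : ℕ):ℂ) = (n:ℂ) - (k:ℂ) := by
            push_cast [Nat.cast_sub hk']; ring
          rw [hcast]; ring
      _ = (u + x 0 + (n:ℂ)) * ∑ k ∈ Finset.range (n+1), estar n k x' * Rr u (n-k) := by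
          rw [Finset.mul_sum]
          apply Finset.sum_congr rfl
          intro k _; ring
      _ = ∏ i : Fin (n+1), (u + x i + ((n+1:ℕ):ℂ) - 1 - ((i:ℕ):ℂ)) := by
          rw [ih x' u, Fin.prod_univ_succ]
          congr 1
          · simp only [Fin.val_zero, Nat.cast_zero]
            push_cast; ring
          · apply Finset.prod_congr rfl
            intro i _
            simp only [hx', Function.comp, Fin.val_succ]
            push_cast; ring

lemma tid : ∀ (n K : ℕ) (μ : ℕ → ℕ), Antitone μ → μ 0 ≤ K → ∀ u : ℂ,
    (∑ k ∈ Finset.range (K+1), hstar n k (fun i : Fin n => (μ (i:ℕ) : ℂ)) * Rr u (K-k))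
      * ∏ j : Fin n, (u + (K:ℂ) + ((j:ℕ):ℂ) - ((μ (j:ℕ) : ℕ):ℂ))
    = ∏ s ∈ Finset.range (K+n), (u + (s:ℂ)) := by
  intro n
  induction n with
  | zero =>
    intro K μ hμ hK u
    rw [Finset.univ_eq_empty, Finset.prod_empty, mul_one, Nat.add_zero]
    rw [Finset.sum_eq_single_of_mem 0 (Finset.mem_range.mpr (by omega))]
    · rw [hstar_zero, one_mul, Nat.sub_zero, Rr]
      norm_num
    · intro b _ hb
      obtain ⟨b', rfl⟩ := Nat.exists_eq_succ_of_ne_zero hb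
      rw [hstar_fin0, zero_mul]
  | succ n ih =>
    intro K μ hμ hK u
    set μ' : ℕ → ℕ := fun m => μ (m+1) with hμ'def
    have hμ'anti : Antitone μ' := fun a b hab => hμ (by omega : a+1 ≤ b+1)
    have htail : (fun i : Fin (n+1) => (μ (i:ℕ) : ℂ)) ∘ Fin.succ
        = (fun i : Fin n => (μ' (i:ℕ) : ℂ)) := by
      funext i; simp [hμ'def, Fin.val_succ]
    -- R' identity
    have hR' : ∑ k ∈ Finset.range (K+2), hstar n k (fun i : Fin n => (μ' (i:ℕ) : ℂ)) * Rr u (K+1-k)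
        = (u + (K:ℂ) - (μ 0 : ℂ)) *
          ∑ k ∈ Finset.range (K+1), hstar (n+1) k (fun i : Fin (n+1) => (μ (i:ℕ) : ℂ)) * Rr u (K-k) := by
      rw [Finset.sum_range_succ']
      simp only [hstar_zero, one_mul, Nat.sub_zero]
      have hrec : ∀ k : ℕ, hstar n (k+1) (fun i : Fin n => (μ' (i:ℕ) : ℂ))
          = hstar (n+1) (k+1) (fun i : Fin (n+1) => (μ (i:ℕ) : ℂ))
            - ((μ 0 : ℂ) - (k:ℂ)) * hstar (n+1) k (fun i : Fin (n+1) => (μ (i:ℕ) : ℂ)) := by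
        intro k
        rw [hstar_rec, htail]
        simp only [Fin.val_zero]
        ring
      have hstep : ∀ k ∈ Finset.range (K+1),
          hstar n (k+1) (fun i : Fin n => (μ' (i:ℕ) : ℂ)) * Rr u (K+1-(k+1))
          = hstar (n+1) (k+1) (fun i : Fin (n+1) => (μ (i:ℕ) : ℂ)) * Rr u (K+1-(k+1))
            - ((μ 0 : ℂ) - (k:ℂ)) * (hstar (n+1) k (fun i : Fin (n+1) => (μ (i:ℕ) : ℂ)) * Rr u (K-k)) := by
        intro k _
        rw [hrec k]
        have h2 : K+1-(k+1) = K-k := by omega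
        rw [h2]; ring
      rw [Finset.sum_congr rfl hstep, Finset.sum_sub_distrib]
      have hS1 : ∑ k ∈ Finset.range (K+1),
            hstar (n+1) (k+1) (fun i : Fin (n+1) => (μ (i:ℕ) : ℂ)) * Rr u (K+1-(k+1)) + Rr u (K+1)
          = ∑ k ∈ Finset.range (K+1),
            hstar (n+1) k (fun i : Fin (n+1) => (μ (i:ℕ) : ℂ)) * (Rr u (K-k) * (u + ((K-k:ℕ):ℂ))) := by
        have hasm : ∑ k ∈ Finset.range (K+2),
              hstar (n+1) k (fun i : Fin (n+1) => (μ (i:ℕ) : ℂ)) * Rr u (K+1-k)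
            = ∑ k ∈ Finset.range (K+1),
              hstar (n+1) (k+1) (fun i : Fin (n+1) => (μ (i:ℕ) : ℂ)) * Rr u (K+1-(k+1)) + Rr u (K+1) := by
          rw [Finset.sum_range_succ']
          simp [hstar_zero]
        rw [← hasm, Finset.sum_range_succ, hstar_vanish (n+1) (K+1) μ hμ (by omega)]
        simp only [zero_mul, add_zero]
        refine Finset.sum_congr rfl fun k hk => ?_
        have hk' : k ≤ K := Nat.lt_succ_iff.mp (Finset.mem_range.mp hk)
        rw [show K+1-k = (K-k)+1 from by omega, Rr_succ]
      have hS2 : ∑ k ∈ Finset.range (K+1),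
            hstar (n+1) k (fun i : Fin (n+1) => (μ (i:ℕ) : ℂ)) * (Rr u (K-k) * (u + ((K-k:ℕ):ℂ)))
          - ∑ k ∈ Finset.range (K+1),
            ((μ 0 : ℂ) - (k:ℂ)) * (hstar (n+1) k (fun i : Fin (n+1) => (μ (i:ℕ) : ℂ)) * Rr u (K-k))
          = (u + (K:ℂ) - (μ 0 : ℂ)) *
            ∑ k ∈ Finset.range (K+1), hstar (n+1) k (fun i : Fin (n+1) => (μ (i:ℕ) : ℂ)) * Rr u (K-k) := by
        rw [← Finset.sum_sub_distrib, Finset.mul_sum]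
        refine Finset.sum_congr rfl fun k hk => ?_
        have hk' : k ≤ K := Nat.lt_succ_iff.mp (Finset.mem_range.mp hk)
        have hcast : ((K-k : ℕ):ℂ) = (K:ℂ) - (k:ℂ) := by
          push_cast [Nat.cast_sub hk']; ring
        rw [hcast]; ring
      linear_combination hS1 + hS2
    -- main step
    rw [Fin.prod_univ_succ]
    have hfac : ∀ j : Fin n, (u + (K:ℂ) + (((j.succ):ℕ):ℂ) - ((μ ((j.succ):ℕ) : ℕ):ℂ))
        = (u + ((K+1:ℕ):ℂ) + ((j:ℕ):ℂ) - ((μ' (j:ℕ) : ℕ):ℂ)) := by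
      intro j
      simp only [Fin.val_succ, hμ'def]
      push_cast; ring
    rw [Finset.prod_congr rfl (fun j _ => hfac j)]
    simp only [Fin.val_zero, Nat.cast_zero]
    calc (∑ k ∈ Finset.range (K+1), hstar (n+1) k (fun i : Fin (n+1) => (μ (i:ℕ) : ℂ)) * Rr u (K-k))
          * ((u + (K:ℂ) + 0 - ((μ 0 : ℕ):ℂ)) * ∏ j : Fin n, (u + ((K+1:ℕ):ℂ) + ((j:ℕ):ℂ) - ((μ' (j:ℕ) : ℕ):ℂ)))
        = ((u + (K:ℂ) - (μ 0 : ℂ)) *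
            ∑ k ∈ Finset.range (K+1), hstar (n+1) k (fun i : Fin (n+1) => (μ (i:ℕ) : ℂ)) * Rr u (K-k))
          * ∏ j : Fin n, (u + ((K+1:ℕ):ℂ) + ((j:ℕ):ℂ) - ((μ' (j:ℕ) : ℕ):ℂ)) := by
          ring
      _ = (∑ k ∈ Finset.range (K+2), hstar n k (fun i : Fin n => (μ' (i:ℕ) : ℂ)) * Rr u (K+1-k))
          * ∏ j : Fin n, (u + ((K+1:ℕ):ℂ) + ((j:ℕ):ℂ) - ((μ' (j:ℕ) : ℕ):ℂ)) := by
          rw [hR']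
      _ = ∏ s ∈ Finset.range (K+(n+1)), (u + (s:ℂ)) := by
          have h10 : μ 1 ≤ μ 0 := hμ (by omega)
          have hmu' : μ' 0 ≤ K + 1 := by
            have : μ' 0 = μ 1 := rfl
            omega
          have := ih (K+1) μ' hμ'anti hmu' u
          rwa [show K+1+n = K+(n+1) from by omega] at this

lemma conj_le (n : ℕ) (μ : ℕ → ℕ) (i : ℕ) : conjP n μ i ≤ n := by
  rw [conjP]
  exact (Finset.card_filter_le _ _).trans (by simp)

lemma conj_anti (n : ℕ) (μ : ℕ → ℕ) : Antitone (conjP n μ) := by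
  intro a b hab
  apply Finset.card_le_card
  intro x hx
  simp only [Finset.mem_filter, Finset.mem_range] at hx ⊢
  omega

lemma conj_ge_iff (n : ℕ) (μ : ℕ → ℕ) (hμ : Antitone μ) (i j : ℕ) (hj : j < n) :
    j + 1 ≤ conjP n μ i ↔ i + 1 ≤ μ j := by
  constructor
  · intro h
    by_contra hc
    push_neg at hc
    have hsub : (Finset.range n).filter (fun r => i + 1 ≤ μ r) ⊆ Finset.range j := by
      intro r hr
      simp only [Finset.mem_filter, Finset.mem_range] at hr ⊢
      by_contra hrj
      push_neg at hrj
      have : μ r ≤ μ j := hμ hrj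
      omega
    have := Finset.card_le_card hsub
    rw [Finset.card_range] at this
    rw [conjP] at h
    omega
  · intro h
    have hsub : Finset.range (j+1) ⊆ (Finset.range n).filter (fun r => i + 1 ≤ μ r) := by
      intro r hr
      simp only [Finset.mem_range] at hr
      simp only [Finset.mem_filter, Finset.mem_range]
      have : μ j ≤ μ r := hμ (by omega)
      constructor
      · omega
      · omega
    have := Finset.card_le_card hsub
    rw [Finset.card_range] at this
    rw [conjP]
    omega

lemma comp_id (n : ℕ) (μ : ℕ → ℕ) (hμ : Antitone μ) (h1 : μ 0 ≤ n) (u : ℂ) :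
    (∏ i : Fin n, (u + (conjP n μ (i:ℕ) : ℂ) + (n:ℂ) - 1 - ((i:ℕ):ℂ)))
      * ∏ j : Fin n, (u + (n:ℂ) + ((j:ℕ):ℂ) - ((μ (j:ℕ)) : ℂ))
    = ∏ s ∈ Finset.range (n+n), (u + (s:ℂ)) := by
  have hμn : ∀ j : ℕ, μ j ≤ n := fun j => (hμ (Nat.zero_le j)).trans h1
  -- the bijection
  set e : Fin n ⊕ Fin n → Fin (n+n) := fun x =>
    match x with
    | .inl i => ⟨conjP n μ (i:ℕ) + (n - 1 - (i:ℕ)), by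
        have h2 := conj_le n μ (i:ℕ); have h3 := i.isLt; omega⟩
    | .inr j => ⟨n + (j:ℕ) - μ (j:ℕ), by
        have h2 := hμn (j:ℕ); have h3 := j.isLt; omega⟩
    with he
  have hinj : Function.Injective e := by
    intro a b hab
    have hval : (e a : ℕ) = (e b : ℕ) := congrArg Fin.val hab
    match a, b with
    | .inl i, .inl i' =>
      simp only [he] at hval
      congr 1
      by_contra hne
      have hne' : (i:ℕ) ≠ (i':ℕ) := fun h => hne (Fin.ext h)
      rcases Nat.lt_or_ge (i:ℕ) (i':ℕ) with h | h
      · have hc := conj_anti n μ (le_of_lt h)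
        have := i'.isLt
        omega
      · have h' : (i':ℕ) < (i:ℕ) := by omega
        have hc := conj_anti n μ (le_of_lt h')
        have := i.isLt
        omega
    | .inr j, .inr j' =>
      simp only [he] at hval
      congr 1
      by_contra hne
      have hne' : (j:ℕ) ≠ (j':ℕ) := fun h => hne (Fin.ext h)
      have m1 := hμn (j:ℕ); have m2 := hμn (j':ℕ)
      rcases Nat.lt_or_ge (j:ℕ) (j':ℕ) with h | h
      · have hc := hμ (le_of_lt h); omega
      · have h' : (j':ℕ) < (j:ℕ) := by omega
        have hc := hμ (le_of_lt h'); omega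
    | .inl i, .inr j =>
      exfalso
      simp only [he] at hval
      have hi := i.isLt; have hj := j.isLt
      have hcle := conj_le n μ (i:ℕ)
      have hmj := hμn (j:ℕ)
      have hkey : conjP n μ (i:ℕ) + μ (j:ℕ) = (i:ℕ) + (j:ℕ) + 1 := by omega
      rcases Nat.lt_or_ge (i:ℕ) (μ (j:ℕ)) with h | h
      · have := (conj_ge_iff n μ hμ (i:ℕ) (j:ℕ) hj).mpr (by omega)
        omega
      · have hnot : ¬ ((j:ℕ) + 1 ≤ conjP n μ (i:ℕ)) := by
          intro hcon
          have := (conj_ge_iff n μ hμ (i:ℕ) (j:ℕ) hj).mp hcon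
          omega
        omega
    | .inr j, .inl i =>
      exfalso
      simp only [he] at hval
      have hi := i.isLt; have hj := j.isLt
      have hcle := conj_le n μ (i:ℕ)
      have hmj := hμn (j:ℕ)
      have hkey : conjP n μ (i:ℕ) + μ (j:ℕ) = (i:ℕ) + (j:ℕ) + 1 := by omega
      rcases Nat.lt_or_ge (i:ℕ) (μ (j:ℕ)) with h | h
      · have := (conj_ge_iff n μ hμ (i:ℕ) (j:ℕ) hj).mpr (by omega)
        omega
      · have hnot : ¬ ((j:ℕ) + 1 ≤ conjP n μ (i:ℕ)) := by
          intro hcon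
          have := (conj_ge_iff n μ hμ (i:ℕ) (j:ℕ) hj).mp hcon
          omega
        omega
  have hbij : Function.Bijective e := by
    rw [Fintype.bijective_iff_injective_and_card]
    exact ⟨hinj, by simp⟩
  have hmain := Fintype.prod_bijective e hbij
    (fun x => u + ((e x : ℕ) : ℂ)) (fun s : Fin (n+n) => u + ((s:ℕ):ℂ)) (fun x => rfl)
  rw [Fintype.prod_sum_type] at hmain
  have hl : ∀ i : Fin n, u + ((e (.inl i) : ℕ) : ℂ)
      = u + (conjP n μ (i:ℕ) : ℂ) + (n:ℂ) - 1 - ((i:ℕ):ℂ) := by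
    intro i
    have hi := i.isLt
    simp only [he]
    have : ((conjP n μ (i:ℕ) + (n - 1 - (i:ℕ)) : ℕ) : ℂ)
        = (conjP n μ (i:ℕ) : ℂ) + ((n:ℂ) - 1 - ((i:ℕ):ℂ)) := by
      push_cast [Nat.cast_sub (by omega : (i:ℕ) ≤ n - 1), Nat.cast_sub (by omega : 1 ≤ n)]
      ring
    rw [this]; ring
  have hr : ∀ j : Fin n, u + ((e (.inr j) : ℕ) : ℂ)
      = u + (n:ℂ) + ((j:ℕ):ℂ) - ((μ (j:ℕ)) : ℂ) := by
    intro j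
    have := hμn (j:ℕ)
    simp only [he]
    have : ((n + (j:ℕ) - μ (j:ℕ) : ℕ) : ℂ)
        = (n:ℂ) + ((j:ℕ):ℂ) - ((μ (j:ℕ)) : ℂ) := by
      push_cast [Nat.cast_sub (by omega : μ (j:ℕ) ≤ n + (j:ℕ))]
      ring
    rw [this]; ring
  calc (∏ i : Fin n, (u + (conjP n μ (i:ℕ) : ℂ) + (n:ℂ) - 1 - ((i:ℕ):ℂ)))
        * ∏ j : Fin n, (u + (n:ℂ) + ((j:ℕ):ℂ) - ((μ (j:ℕ)) : ℂ))
      = (∏ i : Fin n, (u + ((e (.inl i) : ℕ) : ℂ))) * ∏ j : Fin n, (u + ((e (.inr j) : ℕ) : ℂ)) := by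
        rw [Finset.prod_congr rfl (fun i _ => (hl i).symm),
            Finset.prod_congr rfl (fun j _ => (hr j).symm)]
    _ = ∏ s : Fin (n+n), (u + ((s:ℕ):ℂ)) := hmain
    _ = ∏ s ∈ Finset.range (n+n), (u + (s:ℂ)) :=
        Fin.prod_univ_eq_prod_range (fun m => u + (m:ℂ)) (n+n)

lemma extract (N : ℕ) (c : ℕ → ℂ)
    (H : ∀ u : ℂ, ∑ m ∈ Finset.range (N+1), c m * Rr u (N-m) = 0) :
    ∀ m, m ≤ N → c m = 0 := by
  have key : ∀ j, j ≤ N → c (N - j) = 0 := by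
    intro j
    induction j using Nat.strong_induction_on with
    | _ j ih =>
      intro hj
      have hH := H (-(j:ℂ))
      rw [Finset.sum_eq_single_of_mem (N-j) (Finset.mem_range.mpr (by omega))] at hH
      · have hne : Rr (-(j:ℂ)) (N-(N-j)) ≠ 0 := by
          rw [show N-(N-j) = j from by omega, Rr]
          rw [Finset.prod_ne_zero_iff]
          intro s hs
          simp only [Finset.mem_range] at hs
          intro hz
          have : (j:ℂ) = (s:ℂ) := by linear_combination -hz
          have : j = s := Nat.cast_injective this
          omega
        exact (mul_eq_zero.mp hH).resolve_right hne
      · intro b hb hbne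
        rcases Nat.lt_or_ge b (N-j) with h | h
        · -- N - b > j : Rr has zero factor at index j
          have hjlt : j < N - b := by omega
          rw [Rr, Finset.prod_eq_zero (Finset.mem_range.mpr hjlt) (by
            show (-(j:ℂ) + (j:ℕ)) = 0
            ring), mul_zero]
        · -- b > N - j : c b = 0 by ih
          have hbgt : N - j < b := by omega
          have hble : b ≤ N := Nat.lt_succ_iff.mp (Finset.mem_range.mp hb)
          have : c (N - (N - b)) = 0 := ih (N-b) (by omega) (by omega)
          rw [show N-(N-b) = b from by omega] at this
          rw [this, zero_mul]
  intro m hm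
  have := key (N-m) (by omega)
  rwa [show N-(N-m) = m from by omega] at this

end StmtAux

section StmtMain
open Finset

/-- Duality: for a partition `μ` fitting in an `n×n` square,
`e*_k(μ̃₁,…,μ̃ₙ) = h*_k(μ₁,…,μₙ)` for `1 ≤ k ≤ n`. -/
theorem stmt4 (n k : ℕ) (μ : ℕ → ℕ) (hμ : Antitone μ)
    (h1 : μ 0 ≤ n) (hvan : ∀ i, n ≤ i → μ i = 0) (hconj : conjP n μ 0 ≤ n)
    (hk1 : 1 ≤ k) (hkn : k ≤ n) :
    estar n k (fun i => (conjP n μ (i : ℕ) : ℂ))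
      = hstar n k (fun i => (μ (i : ℕ) : ℂ)) := by
  set xc : Fin n → ℂ := fun i => (conjP n μ (i : ℕ) : ℂ) with hxc
  -- pointwise identity (times the common factor)
  have hQ : ∀ u : ℂ,
      (∑ m ∈ Finset.range (n+1), estar n m xc * Rr u (n-m))
        * ∏ j : Fin n, (u + (n:ℂ) + ((j:ℕ):ℂ) - ((μ (j:ℕ)) : ℂ))
      = (∑ m ∈ Finset.range (n+1), hstar n m (fun i : Fin n => (μ (i:ℕ) : ℂ)) * Rr u (n-m))
        * ∏ j : Fin n, (u + (n:ℂ) + ((j:ℕ):ℂ) - ((μ (j:ℕ)) : ℂ)) := by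
    intro u
    rw [eid n xc u, tid n n μ hμ h1 u]
    exact comp_id n μ hμ h1 u
  -- polynomial versions
  set P1 : Polynomial ℂ := ∑ m ∈ Finset.range (n+1),
    Polynomial.C (estar n m xc) * ∏ j ∈ Finset.range (n-m), (Polynomial.X + Polynomial.C (j:ℂ))
    with hP1
  set P2 : Polynomial ℂ := ∑ m ∈ Finset.range (n+1),
    Polynomial.C (hstar n m (fun i : Fin n => (μ (i:ℕ) : ℂ)))
      * ∏ j ∈ Finset.range (n-m), (Polynomial.X + Polynomial.C (j:ℂ)) with hP2
  set Q : Polynomial ℂ := ∏ j : Fin n,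
    (Polynomial.X + Polynomial.C ((n:ℂ) + ((j:ℕ):ℂ) - ((μ (j:ℕ)) : ℂ))) with hQdef
  have hevP1 : ∀ u : ℂ, P1.eval u = ∑ m ∈ Finset.range (n+1), estar n m xc * Rr u (n-m) := by
    intro u
    rw [hP1, Polynomial.eval_finset_sum]
    refine Finset.sum_congr rfl fun m _ => ?_
    rw [Polynomial.eval_mul, Polynomial.eval_C, Polynomial.eval_prod, Rr]
    congr 1
    exact Finset.prod_congr rfl fun j _ => by
      rw [Polynomial.eval_add, Polynomial.eval_X, Polynomial.eval_C]
  have hevP2 : ∀ u : ℂ, P2.eval u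
      = ∑ m ∈ Finset.range (n+1), hstar n m (fun i : Fin n => (μ (i:ℕ) : ℂ)) * Rr u (n-m) := by
    intro u
    rw [hP2, Polynomial.eval_finset_sum]
    refine Finset.sum_congr rfl fun m _ => ?_
    rw [Polynomial.eval_mul, Polynomial.eval_C, Polynomial.eval_prod, Rr]
    congr 1
    exact Finset.prod_congr rfl fun j _ => by
      rw [Polynomial.eval_add, Polynomial.eval_X, Polynomial.eval_C]
  have hevQ : ∀ u : ℂ, Q.eval u = ∏ j : Fin n, (u + (n:ℂ) + ((j:ℕ):ℂ) - ((μ (j:ℕ)) : ℂ)) := by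
    intro u
    rw [hQdef, Polynomial.eval_prod]
    exact Finset.prod_congr rfl fun j _ => by
      rw [Polynomial.eval_add, Polynomial.eval_X, Polynomial.eval_C]; ring
  have hPQ : P1 * Q = P2 * Q := by
    apply Polynomial.funext
    intro u
    rw [Polynomial.eval_mul, Polynomial.eval_mul, hevP1, hevP2, hevQ]
    exact hQ u
  have hQne : Q ≠ 0 := by
    apply Polynomial.Monic.ne_zero
    apply Polynomial.monic_prod_of_monic
    intro j _
    exact Polynomial.monic_X_add_C _
  have hP12 : P1 = P2 := mul_right_cancel₀ hQne hPQ
  have hzero : ∀ u : ℂ, ∑ m ∈ Finset.range (n+1),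
      (estar n m xc - hstar n m (fun i : Fin n => (μ (i:ℕ) : ℂ))) * Rr u (n-m) = 0 := by
    intro u
    have := congrArg (Polynomial.eval u) hP12
    rw [hevP1, hevP2] at this
    rw [Finset.sum_congr rfl (fun m _ => by ring :
      ∀ m ∈ Finset.range (n+1),
        (estar n m xc - hstar n m (fun i : Fin n => (μ (i:ℕ) : ℂ))) * Rr u (n-m)
        = estar n m xc * Rr u (n-m)
          - hstar n m (fun i : Fin n => (μ (i:ℕ) : ℂ)) * Rr u (n-m)), Finset.sum_sub_distrib,
      this, sub_self]
  have := extract n (fun m => estar n m xc - hstar n m (fun i : Fin n => (μ (i:ℕ) : ℂ)))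
    hzero k hkn
  have h2 : estar n k xc - hstar n k (fun i : Fin n => (μ (i:ℕ) : ℂ)) = 0 := this
  rw [hxc] at h2
  linear_combination h2

end StmtMain
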